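/- Let X be a real Banach space such that the set of extreme points of the closed unit ball of X* is weak*-closed. Let Y ⊆ X be a closed subspace and let y* be a norm-one functional in the weak*-closure of the set of extreme points of the unit ball of Y*. If y* has a unique norm-preserving extension x* ∈ X* with ‖x*‖ = 1, then y* is an extreme point of the closed unit ball of Y*. -/

import Mathlib

set_option synthInstance.maxHeartbeats 1000000
set_option maxHeartbeats 1000000

open NormedSpace Metric Set Filter Topology

noncomputable instance {X : Type*} [NormedAddCommGroup X] [NormedSpace ℝ X] :
    LocallyConvexSpace ℝ (WeakDual ℝ X) :=
  WeakBilin.locallyConvexSpace (B := topDualPairing ℝ X)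

section aux
variable {X : Type*} [NormedAddCommGroup X] [NormedSpace ℝ X] (Y : Submodule ℝ X)

/-- Restriction of a functional to a subspace. -/
noncomputable def restr (f : StrongDual ℝ X) : StrongDual ℝ Y := f.comp Y.subtypeL

lemma restr_apply (f : StrongDual ℝ X) (y : Y) : restr Y f y = f y := rfl

lemma norm_restr_le (f : StrongDual ℝ X) : ‖restr Y f‖ ≤ ‖f‖ := by
  calc ‖f.comp Y.subtypeL‖ ≤ ‖f‖ * ‖Y.subtypeL‖ := f.opNorm_comp_le _
  _ ≤ ‖f‖ * 1 := mul_le_mul_of_nonneg_left (Submodule.norm_subtypeL_le Y) (norm_nonneg f)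
  _ = ‖f‖ := mul_one _

/-- Restriction as a map of weak duals. -/
noncomputable def restrW (f : WeakDual ℝ X) : WeakDual ℝ Y :=
  StrongDual.toWeakDual (restr Y (WeakDual.toStrongDual f))

lemma continuous_restrW : Continuous (restrW Y) :=
  WeakDual.continuous_of_continuous_eval fun y => WeakDual.eval_continuous (y : X)

lemma img_eq_pre (S : Set (StrongDual ℝ X)) :
    (StrongDual.toWeakDual '' S : Set (WeakDual ℝ X)) = WeakDual.toStrongDual ⁻¹' S :=
  StrongDual.toWeakDual.toEquiv.image_eq_preimage_symm S

/-- Every extreme point of the unit ball of `Y*` admits a norm-preserving extension which is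
an extreme point of the unit ball of `X*`. -/
lemma exists_extreme_extension {e : StrongDual ℝ Y}
    (he : e ∈ Set.extremePoints ℝ (closedBall (0 : StrongDual ℝ Y) 1)) :
    ∃ f : StrongDual ℝ X, f ∈ Set.extremePoints ℝ (closedBall (0 : StrongDual ℝ X) 1) ∧
      ∀ y : Y, f (y : X) = e y := by
  set Bw : Set (WeakDual ℝ X) := WeakDual.toStrongDual ⁻¹' closedBall 0 1 with hBw
  set F : Set (WeakDual ℝ X) := Bw ∩ {f | ∀ y : Y, f (y : X) = e y} with hF
  have hBc : IsCompact Bw := WeakDual.isCompact_closedBall (𝕜 := ℝ) (E := X) 0 1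
  have hFclosed2 : IsClosed {f : WeakDual ℝ X | ∀ y : Y, f (y : X) = e y} := by
    rw [setOf_forall]
    exact isClosed_iInter fun y => isClosed_eq (WeakDual.eval_continuous _) continuous_const
  have hFc : IsCompact F := hBc.inter_right hFclosed2
  obtain ⟨g, hg1, hg2⟩ := exists_extension_norm_eq Y e
  have hgn : ‖g‖ ≤ 1 := by rw [hg2]; exact (mem_closedBall_zero_iff (E := StrongDual ℝ Y)).mp he.1
  have hFne : F.Nonempty :=
    ⟨StrongDual.toWeakDual g, by simpa [hF, hBw, mem_closedBall_zero_iff] using hgn,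
      fun y => hg1 y⟩
  obtain ⟨f₀, hf₀⟩ := hFc.extremePoints_nonempty hFne
  have hface : IsExtreme ℝ Bw F := by
    constructor
    · exact inter_subset_left
    · rintro x₁ hx₁ x₂ hx₂ x ⟨hxB, hxe⟩ ⟨a, b, ha, hb, hab, hsum⟩
      have hd : WeakDual.toStrongDual x
          = a • WeakDual.toStrongDual x₁ + b • WeakDual.toStrongDual x₂ := by
        rw [← hsum]; rfl
      set r₁ := restr Y (WeakDual.toStrongDual x₁)
      set r₂ := restr Y (WeakDual.toStrongDual x₂)
      have hr₁ : r₁ ∈ closedBall (0 : StrongDual ℝ Y) 1 := (mem_closedBall_zero_iff (E := StrongDual ℝ Y)).mpr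
        (le_trans (norm_restr_le Y _) ((mem_closedBall_zero_iff (E := StrongDual ℝ X)).mp hx₁))
      have hr₂ : r₂ ∈ closedBall (0 : StrongDual ℝ Y) 1 := (mem_closedBall_zero_iff (E := StrongDual ℝ Y)).mpr
        (le_trans (norm_restr_le Y _) ((mem_closedBall_zero_iff (E := StrongDual ℝ X)).mp hx₂))
      have heseg : a • r₁ + b • r₂ = e := by
        ext y
        have h1 : (WeakDual.toStrongDual x) (y : X) = e y := hxe y
        rw [hd] at h1
        simpa [r₁, r₂, restr_apply] using h1
      obtain ⟨he₁, he₂⟩ := (mem_extremePoints.mp he).2 _ hr₁ _ hr₂ ⟨a, b, ha, hb, hab, heseg⟩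
      refine (⟨⟨hx₁, fun y => ?_⟩, ⟨hx₂, fun y => ?_⟩⟩ : x₁ ∈ F ∧ x₂ ∈ F).1
      · have : r₁ y = e y := by rw [he₁]
        simpa [r₁, restr_apply] using this
      · have : r₂ y = e y := by rw [he₂]
        simpa [r₂, restr_apply] using this
  have hf₀B : f₀ ∈ Bw.extremePoints ℝ := hface.extremePoints_subset_extremePoints hf₀
  rw [hBw, ← img_eq_pre, ← image_extremePoints] at hf₀B
  obtain ⟨f, hf, hfeq⟩ := hf₀B
  exact ⟨f, hf, fun y => by
    have := hf₀.1.2 y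
    rw [← hfeq] at this
    exact this⟩

end aux

theorem stmt_3 (X : Type*) [NormedAddCommGroup X] [NormedSpace ℝ X] [CompleteSpace X]
    (hXext : IsClosed
      (StrongDual.toWeakDual '' Set.extremePoints ℝ (Metric.closedBall (0 : StrongDual ℝ X) 1) :
        Set (WeakDual ℝ X)))
    (Y : Submodule ℝ X) (hYclosed : IsClosed (Y : Set X))
    (y' : StrongDual ℝ Y) (hy : ‖y'‖ = 1)
    (hycl : StrongDual.toWeakDual y' ∈
      closure (StrongDual.toWeakDual '' Set.extremePoints ℝ (Metric.closedBall (0 : StrongDual ℝ Y) 1) :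
        Set (WeakDual ℝ Y)))
    (huniq : ∃! x' : StrongDual ℝ X, (∀ y : Y, x' (y : X) = y' y) ∧ ‖x'‖ = 1) :
    y' ∈ Set.extremePoints ℝ (Metric.closedBall (0 : StrongDual ℝ Y) 1) := by
  classical
  obtain ⟨x₀, ⟨hx₀ext, hx₀norm⟩, hx₀uniq⟩ := huniq
  set EYw : Set (WeakDual ℝ Y) :=
    StrongDual.toWeakDual '' Set.extremePoints ℝ (closedBall (0 : StrongDual ℝ Y) 1) with hEYw
  set EXw : Set (WeakDual ℝ X) :=
    StrongDual.toWeakDual '' Set.extremePoints ℝ (closedBall (0 : StrongDual ℝ X) 1) with hEXw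
  -- Step 1: choose extreme extensions
  have hchoice : ∀ g : WeakDual ℝ Y, ∃ f : WeakDual ℝ X,
      g ∈ EYw → f ∈ EXw ∧ ∀ y : Y, f (y : X) = g y := by
    intro g
    by_cases hg : g ∈ EYw
    · obtain ⟨e, he, rfl⟩ := hg
      obtain ⟨f, hf, hfe⟩ := exists_extreme_extension Y he
      exact ⟨StrongDual.toWeakDual f, fun _ => ⟨mem_image_of_mem _ hf, hfe⟩⟩
    · exact ⟨0, fun h => absurd h hg⟩
  choose φ hφ using hchoice
  set L : Filter (WeakDual ℝ Y) := 𝓝[EYw] (StrongDual.toWeakDual y') with hL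
  haveI hne : L.NeBot := mem_closure_iff_nhdsWithin_neBot.mp hycl
  have hmem : ∀ᶠ g in L, g ∈ EYw := eventually_mem_nhdsWithin
  -- Step 2: find a cluster point of the extensions
  have hsub : map φ L ≤ 𝓟 (WeakDual.toStrongDual ⁻¹' closedBall 0 1 : Set (WeakDual ℝ X)) := by
    rw [le_principal_iff, mem_map]
    filter_upwards [hmem] with g hg
    obtain ⟨f, hf, hfeq⟩ := (hφ g hg).1
    show φ g ∈ WeakDual.toStrongDual ⁻¹' closedBall 0 1
    rw [← hfeq]
    simpa [mem_closedBall_zero_iff] using mem_closedBall_zero_iff.mp hf.1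
  obtain ⟨x₁, hx₁K, hx₁cl⟩ := (WeakDual.isCompact_closedBall (𝕜 := ℝ) (E := X) 0 1).exists_clusterPt hsub
  -- x₁ is a (weak image of an) extreme point of the unit ball of X*
  have hx₁mem : x₁ ∈ EXw := by
    have hsub2 : map φ L ≤ 𝓟 EXw := by
      rw [le_principal_iff, mem_map]
      filter_upwards [hmem] with g hg
      exact (hφ g hg).1
    have hcl : ClusterPt x₁ (𝓟 EXw) := hx₁cl.mono hsub2
    have : x₁ ∈ closure EXw := mem_closure_iff_clusterPt.mpr hcl
    rwa [hXext.closure_eq] at this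
  -- the restriction of x₁ to Y is y'
  have htend : Tendsto (restrW Y ∘ φ) L (𝓝 (StrongDual.toWeakDual y')) := by
    have h1 : Tendsto id L (𝓝 (StrongDual.toWeakDual y')) := tendsto_id'.mpr nhdsWithin_le_nhds
    refine h1.congr' ?_
    filter_upwards [hmem] with g hg
    exact (DFunLike.ext _ _ fun y => ((hφ g hg).2 y)).symm
  have hclr : ClusterPt (restrW Y x₁) (map (restrW Y ∘ φ) L) := by
    have := hx₁cl.map (continuous_restrW Y).continuousAt Filter.tendsto_map
    rwa [Filter.map_map] at this
  have hrestr : restrW Y x₁ = StrongDual.toWeakDual y' := by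
    have h2 : ClusterPt (restrW Y x₁) (𝓝 (StrongDual.toWeakDual y')) := hclr.mono htend
    exact t2_iff_nhds.mp inferInstance h2
  obtain ⟨f₁, hf₁ext, hf₁eq⟩ := hx₁mem
  have hres : ∀ y : Y, f₁ (y : X) = y' y := by
    intro y
    have := congrArg (fun h : WeakDual ℝ Y => h y) hrestr
    rw [← hf₁eq] at this
    exact this
  have hf₁n : ‖f₁‖ = 1 := le_antisymm (mem_closedBall_zero_iff.mp hf₁ext.1) (by
    calc (1 : ℝ) = ‖y'‖ := hy.symm
    _ = ‖restr Y f₁‖ := by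
        congr 1
        exact DFunLike.ext _ _ fun y => (hres y).symm
    _ ≤ ‖f₁‖ := norm_restr_le Y f₁)
  have hx₀extreme : x₀ ∈ Set.extremePoints ℝ (closedBall (0 : StrongDual ℝ X) 1) :=
    hx₀uniq f₁ ⟨hres, hf₁n⟩ ▸ hf₁ext
  -- Step 3: conclude that y' is extreme
  rw [mem_extremePoints]
  refine ⟨(mem_closedBall_zero_iff (E := StrongDual ℝ Y)).mpr hy.le, ?_⟩
  rintro a ha b hb ⟨s, t, hs, ht, hst, hsum⟩
  obtain ⟨a', ha'e, ha'n⟩ := exists_extension_norm_eq Y a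
  obtain ⟨b', hb'e, hb'n⟩ := exists_extension_norm_eq Y b
  set c : StrongDual ℝ X := s • a' + t • b' with hc
  have hcext : ∀ y : Y, c (y : X) = y' y := by
    intro y
    rw [← hsum]
    simp [hc, ha'e y, hb'e y]
  have hcn1 : ‖c‖ ≤ 1 := by
    calc ‖c‖ ≤ ‖s • a'‖ + ‖t • b'‖ := norm_add_le _ _
    _ = s * ‖a'‖ + t * ‖b'‖ := by
        rw [norm_smul s a', norm_smul t b', Real.norm_of_nonneg hs.le, Real.norm_of_nonneg ht.le]
    _ ≤ s * 1 + t * 1 := by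
        gcongr
        · rw [ha'n]; exact (mem_closedBall_zero_iff (E := StrongDual ℝ Y)).mp ha
        · rw [hb'n]; exact (mem_closedBall_zero_iff (E := StrongDual ℝ Y)).mp hb
    _ = 1 := by linarith
  have hcn : ‖c‖ = 1 := le_antisymm hcn1 (by
    calc (1 : ℝ) = ‖y'‖ := hy.symm
    _ = ‖restr Y c‖ := by
        congr 1
        exact DFunLike.ext _ _ fun y => (hcext y).symm
    _ ≤ ‖c‖ := norm_restr_le Y c)
  have hceq : c = x₀ := hx₀uniq c ⟨hcext, hcn⟩
  have ha'ball : a' ∈ closedBall (0 : StrongDual ℝ X) 1 := (mem_closedBall_zero_iff (E := StrongDual ℝ X)).mpr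
    (ha'n ▸ (mem_closedBall_zero_iff (E := StrongDual ℝ Y)).mp ha)
  have hb'ball : b' ∈ closedBall (0 : StrongDual ℝ X) 1 := (mem_closedBall_zero_iff (E := StrongDual ℝ X)).mpr
    (hb'n ▸ (mem_closedBall_zero_iff (E := StrongDual ℝ Y)).mp hb)
  obtain ⟨hA, hB⟩ := (mem_extremePoints.mp hx₀extreme).2 _ ha'ball _ hb'ball ⟨s, t, hs, ht, hst, hceq ▸ hc.symm⟩
  have hx₀res : ∀ y : Y, x₀ (y : X) = y' y := hx₀ext
  constructor
  · exact DFunLike.ext _ _ fun y => by rw [← ha'e y, hA]; exact hx₀res y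
  · exact DFunLike.ext _ _ fun y => by rw [← hb'e y, hB]; exact hx₀res y
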